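/- arXiv:1706.03786 — 3 statements merged into one kernel-verified Lean document; each statement's English description precedes it below -/
import Mathlib

section
/- Let N ≥ 1, let μ be a probability measure on the unitary group U(N), let x be a fixed basis index, and let ε ∈ [0,1). Suppose the first two moments of the output probability p_x(U) = |⟨x|U|0⟩|² under μ match the Haar moments up to relative error ε, in the sense that ∫ p_x(U) dμ(U) ≥ (1−ε)/N and ∫ p_x(U)² dμ(U) ≤ (1+ε)·2/(N(N+1)). Then for every α ∈ [0,1], μ{ U : |⟨x|U|0⟩|² > α(1−ε)/N } ≥ (1−α)²(1−ε)²/(2(1+ε)). (This is the anticoncentration theorem for relative ε-approximate unitary 2-designs; the moment hypotheses are exactly the consequences of the relative 2-design property that the result uses.) -/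
open MeasureTheory

noncomputable section

/-- The unitary group `U(N)` of `N × N` complex unitary matrices. -/
abbrev UG (N : ℕ) := Matrix.unitaryGroup (Fin N) ℂ

noncomputable instance (N : ℕ) : MeasurableSpace (UG N) := borel _

instance (N : ℕ) : BorelSpace (UG N) := ⟨rfl⟩

/-- The output probability `p_x(U) = |⟨x|U|0⟩|²`, i.e. the squared modulus of the
`(x, 0)` matrix entry of the unitary `U`. -/
def outProb {N : ℕ} [NeZero N] (x : Fin N) (U : UG N) : ℝ :=
  ‖(U : Matrix (Fin N) (Fin N) ℂ) x 0‖ ^ 2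

set_option maxHeartbeats 1600000 in
/-- **Anticoncentration of relative ε-approximate unitary 2-designs.**
If the first two moments of the output probability `p_x(U) = |⟨x|U|0⟩|²` under a
probability measure `μ` on `U(N)` match the Haar moments `1/N` and `2/(N(N+1))` up
to relative error `ε`, then for every `α ∈ [0,1]`,
`μ{ U : |⟨x|U|0⟩|² > α(1−ε)/N } ≥ (1−α)²(1−ε)²/(2(1+ε))`. -/
theorem anticoncentration_of_two_design
    (N : ℕ) [NeZero N] (μ : Measure (UG N)) [IsProbabilityMeasure μ]
    (x : Fin N) (ε : ℝ) (hε0 : 0 ≤ ε) (hε1 : ε < 1)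
    (hmom1 : (1 - ε) / N ≤ ∫ U, outProb x U ∂μ)
    (hmom2 : ∫ U, (outProb x U) ^ 2 ∂μ ≤ (1 + ε) * (2 / (N * (N + 1))))
    (α : ℝ) (hα0 : 0 ≤ α) (hα1 : α ≤ 1) :
    ENNReal.ofReal ((1 - α) ^ 2 * (1 - ε) ^ 2 / (2 * (1 + ε)))
      ≤ μ {U : UG N | α * (1 - ε) / N < outProb x U} := by
  by_cases hα : α = 1
  · subst hα
    simp
  have hα1' : α < 1 := lt_of_le_of_ne hα1 hα
  set f := outProb x with hf
  have hcont : Continuous f := by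
    have hc : Continuous fun U : UG N => (U : Matrix (Fin N) (Fin N) ℂ) x 0 :=
      (continuous_apply (0 : Fin N)).comp ((continuous_apply x).comp continuous_subtype_val)
    exact (continuous_norm.comp hc).pow 2
  have hmeas : Measurable f := hcont.measurable
  have hf0 : ∀ U, 0 ≤ f U := fun U => sq_nonneg _
  have hf1 : ∀ U, f U ≤ 1 := by
    intro U
    have h := entry_norm_bound_of_unitary U.2 x 0
    have h2 := norm_nonneg ((U : Matrix (Fin N) (Fin N) ℂ) x 0)
    show ‖_‖ ^ 2 ≤ 1
    nlinarith
  have hint : Integrable f μ :=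
    (integrable_const (1:ℝ)).mono' hcont.aestronglyMeasurable
      (ae_of_all _ fun U => by rw [Real.norm_eq_abs, abs_of_nonneg (hf0 U)]; exact hf1 U)
  have hint2 : Integrable (fun U => f U ^ 2) μ :=
    (integrable_const (1:ℝ)).mono' (hcont.pow 2).aestronglyMeasurable
      (ae_of_all _ fun U => by
        rw [Real.norm_eq_abs, abs_of_nonneg (sq_nonneg _)]
        nlinarith [hf0 U, hf1 U])
  clear_value f
  set Nr : ℝ := (N : ℝ) with hNr
  clear_value Nr
  have hNr1 : (1:ℝ) ≤ Nr := by
    rw [hNr]; exact_mod_cast Nat.one_le_iff_ne_zero.mpr (NeZero.ne N)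
  have hNr0 : (0:ℝ) < Nr := lt_of_lt_of_le one_pos hNr1
  set t : ℝ := α * (1 - ε) / N with htdef
  have ht0 : 0 ≤ t := div_nonneg (mul_nonneg hα0 (by linarith)) (Nat.cast_nonneg N)
  clear_value t
  set A := {U : UG N | t < f U} with hA
  have hAmeas : MeasurableSet A := measurableSet_lt measurable_const hmeas
  clear_value A
  set m : ℝ := (μ A).toReal with hm
  clear_value m
  have hm0 : 0 ≤ m := by rw [hm]; exact ENNReal.toReal_nonneg
  have hm1 : m ≤ 1 := by
    rw [hm]
    exact ENNReal.toReal_le_of_le_ofReal one_pos.le (by simpa using prob_le_one (μ := μ) (s := A))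
  set M : ℝ := ∫ U, f U ^ 2 ∂μ with hM
  clear_value M
  have hintInd : Integrable (A.indicator f) μ := hint.indicator hAmeas
  -- Step 1
  have step1 : ∫ U, f U ∂μ ≤ t + ∫ U, A.indicator f U ∂μ := by
    have hpt : ∀ U, f U ≤ t + A.indicator f U := by
      intro U
      by_cases h : U ∈ A
      · rw [Set.indicator_of_mem h]; linarith
      · rw [Set.indicator_of_notMem h]
        rw [hA] at h
        have : ¬ (t < f U) := h
        linarith [not_lt.mp this]
    calc ∫ U, f U ∂μ ≤ ∫ U, (t + A.indicator f U) ∂μ :=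
          integral_mono hint ((integrable_const t).add hintInd) hpt
      _ = t + ∫ U, A.indicator f U ∂μ := by
          rw [integral_add (integrable_const t) hintInd, integral_const]
          simp
  -- Step 2
  have step2 : ∀ c : ℝ, 0 < c → ∫ U, A.indicator f U ∂μ ≤ M / (2 * c) + c / 2 * m := by
    intro c hc
    have hpt : ∀ U, A.indicator f U ≤ f U ^ 2 / (2 * c) + A.indicator (fun _ => c / 2) U := by
      intro U
      by_cases h : U ∈ A
      · rw [Set.indicator_of_mem h, Set.indicator_of_mem h]
        have : 0 ≤ (f U - c)^2 := sq_nonneg _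
        rw [div_add' _ _ _ (by positivity), le_div_iff₀ (by positivity)]
        nlinarith
      · rw [Set.indicator_of_notMem h, Set.indicator_of_notMem h]
        positivity
    have hi1 : Integrable (fun U => f U ^ 2 / (2 * c)) μ := hint2.div_const _
    have hi2 : Integrable (A.indicator fun _ : UG N => c / 2) μ :=
      (integrable_const _).indicator hAmeas
    calc ∫ U, A.indicator f U ∂μ
        ≤ ∫ U, (f U ^ 2 / (2 * c) + A.indicator (fun _ => c / 2) U) ∂μ :=
          integral_mono hintInd (hi1.add hi2) hpt
      _ = M / (2 * c) + c / 2 * m := by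
          rw [integral_add hi1 hi2, integral_indicator_const _ hAmeas, integral_div]
          rw [smul_eq_mul, measureReal_def, ← hm, ← hM]; ring
  set S : ℝ := (1 - α) * (1 - ε) / Nr with hSdef
  clear_value S
  have hS0 : 0 < S := by
    rw [hSdef]; exact div_pos (by nlinarith) hNr0
  have hStI : S ≤ ∫ U, A.indicator f U ∂μ := by
    have : t + S = (1 - ε) / Nr := by
      rw [htdef, hSdef, hNr]
      have hN0 : (N : ℝ) ≠ 0 := Nat.cast_ne_zero.mpr (NeZero.ne N)
      field_simp
      ring
    have h1 : (1 - ε) / Nr ≤ ∫ U, f U ∂μ := hmom1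
    linarith
  have hM0 : 0 ≤ M := by rw [hM]; exact integral_nonneg (fun U => sq_nonneg _)
  have hMpos : 0 < M := by
    rcases lt_or_eq_of_le hM0 with h | h
    · exact h
    · exfalso
      have h2 := step2 S hS0
      rw [← h] at h2
      have h5 : S ≤ 0 / (2 * S) + S / 2 * m := le_trans hStI h2
      rw [zero_div, zero_add] at h5
      nlinarith [mul_nonneg (by linarith : (0:ℝ) ≤ S / 2) (by linarith : (0:ℝ) ≤ 1 - m)]
  have hkey : S ^ 2 ≤ M * m := by
    have h2 := step2 (M / S) (div_pos hMpos hS0)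
    have h3 : S ≤ M / (2 * (M / S)) + M / S / 2 * m := le_trans hStI h2
    have hMS : 0 < M / S := div_pos hMpos hS0
    have h4 : M / (2 * (M / S)) = S / 2 := by
      rw [div_eq_iff (mul_pos two_pos hMS).ne']
      field_simp
    rw [h4] at h3
    rw [div_div] at h3
    have h6 : S * S ≤ (S / 2 + M / (S * 2) * m) * S := mul_le_mul_of_nonneg_right h3 hS0.le
    have h7 : (S / 2 + M / (S * 2) * m) * S = S * S / 2 + M * m / 2 := by
      field_simp
    rw [sq]
    linarith
  set R : ℝ := (1 - α) ^ 2 * (1 - ε) ^ 2 / (2 * (1 + ε)) with hR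
  clear_value R
  have hR0 : 0 ≤ R := by rw [hR]; positivity
  have hB : M ≤ (1 + ε) * (2 / (Nr * (Nr + 1))) := hmom2
  have hRM : R * M ≤ S ^ 2 := by
    have h1 : R * M ≤ R * ((1 + ε) * (2 / (Nr * (Nr + 1)))) :=
      mul_le_mul_of_nonneg_left hB hR0
    have h2 : R * ((1 + ε) * (2 / (Nr * (Nr + 1)))) =
        (1 - α) ^ 2 * (1 - ε) ^ 2 / (Nr * (Nr + 1)) := by
      have h1e : (0:ℝ) < 2 * (1 + ε) := by linarith
      rw [hR, mul_div_assoc', div_mul_div_comm,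
        show (1 - α) ^ 2 * (1 - ε) ^ 2 * ((1 + ε) * 2) =
          (2 * (1 + ε)) * ((1 - α) ^ 2 * (1 - ε) ^ 2) from by ring,
        mul_div_mul_left _ _ h1e.ne']
    have h3 : (1 - α) ^ 2 * (1 - ε) ^ 2 / (Nr * (Nr + 1)) ≤
        (1 - α) ^ 2 * (1 - ε) ^ 2 / (Nr * Nr) := by
      apply div_le_div_of_nonneg_left (by positivity) (by positivity) (by nlinarith)
    have h4 : S ^ 2 = (1 - α) ^ 2 * (1 - ε) ^ 2 / (Nr * Nr) := by
      rw [hSdef]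
      rw [div_pow, mul_pow]
      ring_nf
    linarith
  have hRm : R ≤ m := by
    have h' : M * R ≤ M * m := by
      calc M * R = R * M := mul_comm _ _
        _ ≤ S ^ 2 := hRM
        _ ≤ M * m := hkey
    exact le_of_mul_le_mul_left h' hMpos
  have hset : {U : UG N | α * (1 - ε) / Nr < f U} = A := by rw [hA, htdef, hNr]
  rw [hset]
  calc ENNReal.ofReal R ≤ ENNReal.ofReal m := ENNReal.ofReal_le_ofReal hRm
    _ = μ A := by rw [hm, ENNReal.ofReal_toReal (measure_ne_top μ A)]
end
end

section
/- Let N ≥ 1 and let x be a fixed basis index. The second moment of the output probability of a Haar-random N×N unitary satisfies ∫ |⟨x|U|0⟩|⁴ dμ_Haar(U) = 2/(N(N+1)). -/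
open MeasureTheory ComplexConjugate

noncomputable section

namespace HaarAux
variable {N : ℕ}

/-- Matrix acting as the 2×2 block `[[p,q],[r,s]]` on rows/columns `x,y`, identity elsewhere. -/
def emb2 (x y : Fin N) (p q r s : ℂ) : Matrix (Fin N) (Fin N) ℂ :=
  Matrix.of fun i j =>
    if i = x then (if j = x then p else if j = y then q else 0)
    else if i = y then (if j = x then r else if j = y then s else 0)
    else if j = i then 1 else 0

lemma sum_two' {M : Type*} [AddCommMonoid M] {x y : Fin N} (hxy : x ≠ y) (f : Fin N → M)
    (h0 : ∀ k, k ≠ x → k ≠ y → f k = 0) : ∑ k, f k = f x + f y := by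
  classical
  rw [← Finset.sum_subset (Finset.subset_univ ({x, y} : Finset (Fin N)))]
  · rw [Finset.sum_insert (by simp [hxy]), Finset.sum_singleton]
  · intro k _ hk
    simp only [Finset.mem_insert, Finset.mem_singleton, not_or] at hk
    exact h0 k hk.1 hk.2

lemma emb2_mul_apply_x {x y : Fin N} (hxy : x ≠ y) (p q r s : ℂ)
    (U : Matrix (Fin N) (Fin N) ℂ) (j : Fin N) :
    (emb2 x y p q r s * U) x j = p * U x j + q * U y j := by
  rw [Matrix.mul_apply]
  rw [sum_two' hxy _ (fun k hkx hky => by simp [emb2, hkx, hky])]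
  simp [emb2, hxy, Ne.symm hxy]

lemma emb2_mul_apply_y {x y : Fin N} (hxy : x ≠ y) (p q r s : ℂ)
    (U : Matrix (Fin N) (Fin N) ℂ) (j : Fin N) :
    (emb2 x y p q r s * U) y j = r * U x j + s * U y j := by
  rw [Matrix.mul_apply]
  rw [sum_two' hxy _ (fun k hkx hky => by simp [emb2, hkx, hky, Ne.symm hxy])]
  simp [emb2, hxy, Ne.symm hxy]

lemma emb2_mul_apply_other {x y i : Fin N} (hix : i ≠ x) (hiy : i ≠ y) (p q r s : ℂ)
    (U : Matrix (Fin N) (Fin N) ℂ) (j : Fin N) :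
    (emb2 x y p q r s * U) i j = U i j := by
  rw [Matrix.mul_apply]
  rw [Fintype.sum_eq_single i (fun k hk => by simp [emb2, hix, hiy, hk])]
  simp [emb2, hix, hiy]

lemma star_emb2 {x y : Fin N} (hxy : x ≠ y) (p q r s : ℂ) :
    star (emb2 x y p q r s) = emb2 x y (conj p) (conj r) (conj q) (conj s) := by
  ext i j
  simp only [Matrix.star_apply, emb2, Matrix.of_apply]
  by_cases hix : i = x <;> by_cases hiy : i = y <;> by_cases hjx : j = x <;>
    by_cases hjy : j = y <;> by_cases hij : j = i <;>
    simp_all [Ne.symm hxy] <;> simp_all [eq_comm]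

lemma emb2_mul_emb2 {x y : Fin N} (hxy : x ≠ y) (p q r s p' q' r' s' : ℂ) :
    emb2 x y p q r s * emb2 x y p' q' r' s' =
      emb2 x y (p * p' + q * r') (p * q' + q * s') (r * p' + s * r') (r * q' + s * s') := by
  ext i j
  by_cases hix : i = x
  · subst hix
    rw [emb2_mul_apply_x hxy]
    by_cases hjx : j = i <;> by_cases hjy : j = y <;>
      simp_all [emb2, Ne.symm hxy]
  · by_cases hiy : i = y
    · subst hiy
      rw [emb2_mul_apply_y hxy]
      by_cases hjx : j = x <;> by_cases hjy : j = i <;>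
        simp_all [emb2, Ne.symm hxy]
    · rw [emb2_mul_apply_other hix hiy]
      simp [emb2, hix, hiy]

lemma emb2_id (x y : Fin N) (hxy : x ≠ y) : emb2 x y 1 0 0 1 = 1 := by
  ext i j
  by_cases hix : i = x <;> by_cases hiy : i = y <;> by_cases hij : j = i <;>
    simp_all [emb2, Matrix.one_apply, Ne.symm hxy] <;> simp_all [eq_comm]

lemma emb2_mem {x y : Fin N} (hxy : x ≠ y) {p q r s : ℂ}
    (h1 : p * conj p + q * conj q = 1) (h2 : r * conj r + s * conj s = 1)
    (h3 : p * conj r + q * conj s = 0) :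
    emb2 x y p q r s ∈ Matrix.unitaryGroup (Fin N) ℂ := by
  have h3' : r * conj p + s * conj q = 0 := by
    have := congrArg (starRingEnd ℂ) h3
    simpa [mul_comm] using this
  rw [Matrix.mem_unitaryGroup_iff, star_emb2 hxy, emb2_mul_emb2 hxy, h1, h2, h3, h3',
    emb2_id x y hxy]

end HaarAux

set_option maxHeartbeats 2000000 in
open HaarAux in
/-- **Second Haar moment of the output probability.**
For `N ≥ 1` and a fixed basis index `x`, the second moment of the output probability
of a Haar-random `N × N` unitary is `∫ |⟨x|U|0⟩|⁴ dμ_Haar(U) = 2/(N(N+1))`. -/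
theorem haar_second_moment_outProb
    (N : ℕ) [NeZero N] (μHaar : Measure (UG N)) [μHaar.IsHaarMeasure]
    [IsProbabilityMeasure μHaar] (x : Fin N) :
    ∫ U, (outProb x U) ^ 2 ∂μHaar = 2 / (N * (N + 1)) := by
  classical
  have hN : 0 < N := Nat.pos_of_ne_zero (NeZero.ne N)
  -- entry functions and the normSq version of outProb
  set E : Fin N → UG N → ℂ := fun y U => (U : Matrix (Fin N) (Fin N) ℂ) y 0 with hE
  set P : Fin N → UG N → ℝ := fun y U => Complex.normSq (E y U) with hP
  have hPout : ∀ y (U : UG N), outProb y U = P y U := fun y U => Complex.sq_norm _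
  have hEcont : ∀ y, Continuous (E y) := fun y => continuous_subtype_val.matrix_elem y 0
  have hEbd : ∀ y (U : UG N), ‖E y U‖ ≤ 1 := fun y U => by
    simpa using entry_norm_bound_of_unitary U.2 y 0
  have hPnn : ∀ y (U : UG N), 0 ≤ P y U := fun y U => Complex.normSq_nonneg _
  have hPle : ∀ y (U : UG N), P y U ≤ 1 := fun y U => by
    show Complex.normSq (E y U) ≤ 1
    rw [← Complex.sq_norm]
    nlinarith [hEbd y U, norm_nonneg (E y U)]
  have hPcont : ∀ y, Continuous (P y) := fun y =>
    Complex.continuous_normSq.comp (hEcont y)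
  -- integrability helper
  have hInt : ∀ (f : UG N → ℝ) (C : ℝ), Continuous f → (∀ U, ‖f U‖ ≤ C) →
      Integrable f μHaar := fun f C hc hb =>
    (integrable_const C).mono' hc.aestronglyMeasurable (Filter.Eventually.of_forall hb)
  have hIntP : ∀ y, Integrable (fun U => P y U) μHaar := fun y =>
    hInt _ 1 (hPcont y) fun U => by
      rw [Real.norm_eq_abs, abs_of_nonneg (hPnn y U)]; exact hPle y U
  have hIntPP : ∀ y z, Integrable (fun U => P y U * P z U) μHaar := fun y z =>
    hInt _ 1 ((hPcont y).mul (hPcont z)) fun U => by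
      rw [Real.norm_eq_abs, abs_of_nonneg (mul_nonneg (hPnn y U) (hPnn z U))]
      nlinarith [hPnn y U, hPnn z U, hPle y U, hPle z U]
  have hIntP2 : ∀ y, Integrable (fun U => P y U ^ 2) μHaar := fun y => by
    have := hIntPP y y
    simpa [sq] using this
  -- sum of output probabilities over a column is 1
  have hsum : ∀ U : UG N, ∑ y, P y U = 1 := by
    intro U
    have h := Matrix.mem_unitaryGroup_iff'.mp U.2
    have h00 : (star (U : Matrix (Fin N) (Fin N) ℂ) * U) 0 0 = 1 := by
      rw [h]; simp
    rw [Matrix.mul_apply] at h00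
    have hcast : ((∑ y, P y U : ℝ) : ℂ) = 1 := by
      push_cast
      rw [← h00]
      refine Finset.sum_congr rfl fun y _ => ?_
      simp [hP, hE, Matrix.star_apply, Complex.normSq_eq_conj_mul_self]
    exact_mod_cast hcast
  -- Haar invariance
  have hinv : ∀ (w : UG N) (f : UG N → ℝ),
      ∫ U, f (w * U) ∂μHaar = ∫ U, f U ∂μHaar := fun w f =>
    integral_mul_left_eq_self f w
  -- rewrite the goal in terms of P
  have hgoal : ∫ U, (outProb x U) ^ 2 ∂μHaar = ∫ U, P x U ^ 2 ∂μHaar := by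
    refine integral_congr_ae (Filter.Eventually.of_forall fun U => ?_)
    simp only [hPout]
  rw [hgoal]
  -- the case N = 1
  by_cases hN1 : N = 1
  · subst hN1
    have hx0 : x = 0 := Subsingleton.elim x 0
    have hone : ∀ U : UG 1, P x U = 1 := fun U => by
      simpa [Fin.sum_univ_one, hx0] using hsum U
    rw [integral_congr_ae (Filter.Eventually.of_forall
      (fun U => by simp only [hone U, one_pow] : ∀ U : UG 1, P x U ^ 2 = (1:ℝ)))]
    simp
    norm_num
  -- now N ≥ 2 : pick y₀ ≠ x
  obtain ⟨y₀, hy₀⟩ : ∃ y : Fin N, y ≠ x := by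
    have h2 : 1 < Fintype.card (Fin N) := by
      rw [Fintype.card_fin]; omega
    exact Fintype.exists_ne_of_one_lt_card h2 x
  -- swap unitaries
  have hswap_mem : ∀ (a b : Fin N), a ≠ b →
      emb2 a b 0 1 1 0 ∈ Matrix.unitaryGroup (Fin N) ℂ := fun a b hab =>
    emb2_mem hab (by simp) (by simp) (by simp)
  -- first moment: ∫ P y = ∫ P x for every y
  have hfirst : ∀ y, ∫ U, P y U ∂μHaar = ∫ U, P x U ∂μHaar := by
    intro y
    by_cases hyx : y = x
    · rw [hyx]
    · set w : UG N := ⟨emb2 y x 0 1 1 0, hswap_mem y x hyx⟩ with hw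
      have := hinv w (fun U => P y U)
      rw [← this]
      refine integral_congr_ae (Filter.Eventually.of_forall fun U => ?_)
      show P y (w * U) = P x U
      have hentry : E y (w * U) = E x U := by
        show ((w * U : UG N) : Matrix (Fin N) (Fin N) ℂ) y 0 = _
        rw [show ((w * U : UG N) : Matrix (Fin N) (Fin N) ℂ)
            = emb2 y x 0 1 1 0 * (U : Matrix (Fin N) (Fin N) ℂ) from rfl,
          emb2_mul_apply_x hyx]
        simp [hE]
      show Complex.normSq (E y (w * U)) = Complex.normSq (E x U)
      rw [hentry]
    -- value of the first moment
  have hfm : ∫ U, P x U ∂μHaar = 1 / N := by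
    have hNsum : (N : ℝ) * ∫ U, P x U ∂μHaar = 1 := by
      calc (N : ℝ) * ∫ U, P x U ∂μHaar = ∑ y : Fin N, ∫ U, P y U ∂μHaar := by
            rw [Finset.sum_congr rfl fun y _ => hfirst y]
            simp [Finset.sum_const, mul_comm]
        _ = ∫ U, ∑ y, P y U ∂μHaar := (integral_finset_sum _ fun y _ => hIntP y).symm
        _ = ∫ U, (1 : ℝ) ∂μHaar := by
            refine integral_congr_ae (Filter.Eventually.of_forall fun U => ?_)
            exact hsum U
        _ = 1 := by simp
    field_simp at hNsum ⊢
    linarith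
  -- mixed second moments are all equal for y ≠ x
  have hmixed : ∀ y, y ≠ x →
      ∫ U, P x U * P y U ∂μHaar = ∫ U, P x U * P y₀ U ∂μHaar := by
    intro y hy
    by_cases hyy : y = y₀
    · rw [hyy]
    · set w : UG N := ⟨emb2 y y₀ 0 1 1 0, hswap_mem y y₀ hyy⟩ with hw
      have := hinv w (fun U => P x U * P y U)
      rw [← this]
      refine integral_congr_ae (Filter.Eventually.of_forall fun U => ?_)
      show P x (w * U) * P y (w * U) = P x U * P y₀ U
      have hx' : E x (w * U) = E x U := by
        show (emb2 y y₀ 0 1 1 0 * (U : Matrix (Fin N) (Fin N) ℂ)) x 0 = _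
        rw [emb2_mul_apply_other (Ne.symm hy) (Ne.symm hy₀)]
      have hy' : E y (w * U) = E y₀ U := by
        show (emb2 y y₀ 0 1 1 0 * (U : Matrix (Fin N) (Fin N) ℂ)) y 0 = _
        rw [emb2_mul_apply_x hyy]
        simp [hE]
      show Complex.normSq (E x (w * U)) * Complex.normSq (E y (w * U))
        = Complex.normSq (E x U) * Complex.normSq (E y₀ U)
      rw [hx', hy']
  -- 1/N = α + (N-1) β
  have key1 : 1 / (N : ℝ) = ∫ U, P x U ^ 2 ∂μHaar
      + ((N : ℝ) - 1) * ∫ U, P x U * P y₀ U ∂μHaar := by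
    calc (1 : ℝ) / N = ∫ U, P x U ∂μHaar := hfm.symm
      _ = ∫ U, ∑ y, P x U * P y U ∂μHaar := by
          refine integral_congr_ae (Filter.Eventually.of_forall fun U => ?_)
          show P x U = ∑ y, P x U * P y U
          rw [← Finset.mul_sum, hsum U, mul_one]
      _ = ∑ y : Fin N, ∫ U, P x U * P y U ∂μHaar :=
          integral_finset_sum _ fun y _ => hIntPP x y
      _ = ∫ U, P x U * P x U ∂μHaar
          + ∑ y ∈ ({x}ᶜ : Finset (Fin N)), ∫ U, P x U * P y U ∂μHaar := by
          rw [← Finset.sum_compl_add_sum {x}]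
          rw [Finset.sum_singleton]
          ring
      _ = ∫ U, P x U ^ 2 ∂μHaar + ((N : ℝ) - 1) * ∫ U, P x U * P y₀ U ∂μHaar := by
          congr 1
          · refine integral_congr_ae (Filter.Eventually.of_forall fun U => ?_)
            show P x U * P x U = P x U ^ 2
            rw [sq]
          · rw [Finset.sum_congr rfl fun y hy => hmixed y (by simpa using hy)]
            rw [Finset.sum_const, Finset.card_compl, Finset.card_singleton,
              Fintype.card_fin, nsmul_eq_mul]
            congr 1
            have : (1:ℕ) ≤ N := hN
            push_cast [Nat.cast_sub this]
            ring
  -- the rotation step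
  set c : ℝ := (Real.sqrt 2)⁻¹ with hc
  have hcsq : c ^ 2 = 1 / 2 := by
    rw [hc, inv_pow, Real.sq_sqrt (by norm_num : (0:ℝ) ≤ 2)]
    norm_num
  have hcc : (c : ℂ) * conj (c : ℂ) = 1 / 2 := by
    rw [Complex.conj_ofReal, ← Complex.ofReal_mul, ← sq, hcsq]
    push_cast
    ring
  have hrot : ∀ u : ℂ, u * conj u = 1 →
      ∫ U, Complex.normSq (E x U + u * E y₀ U) ^ 2 ∂μHaar
        = 4 * ∫ U, P x U ^ 2 ∂μHaar := by
    intro u hu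
    have hxy₀ : x ≠ y₀ := Ne.symm hy₀
    have h1 : (c : ℂ) * conj (c : ℂ) + ((c : ℂ) * u) * conj ((c : ℂ) * u) = 1 := by
      have : (c : ℂ) * conj (c : ℂ) + ((c : ℂ) * u) * conj ((c : ℂ) * u)
          = ((c : ℂ) * conj (c : ℂ)) * (1 + u * conj u) := by
        rw [map_mul]; ring
      rw [this, hcc, hu]; norm_num
    have h2 : (-((c : ℂ) * conj u)) * conj (-((c : ℂ) * conj u)) + (c : ℂ) * conj (c : ℂ) = 1 := by
      have : (-((c : ℂ) * conj u)) * conj (-((c : ℂ) * conj u)) + (c : ℂ) * conj (c : ℂ)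
          = ((c : ℂ) * conj (c : ℂ)) * (u * conj u + 1) := by
        rw [map_neg, map_mul, Complex.conj_conj]; ring
      rw [this, hcc, hu]; norm_num
    have h3 : (c : ℂ) * conj (-((c : ℂ) * conj u)) + ((c : ℂ) * u) * conj (c : ℂ) = 0 := by
      rw [map_neg, map_mul, Complex.conj_conj]; ring
    set w : UG N := ⟨emb2 x y₀ (c : ℂ) ((c : ℂ) * u) (-((c : ℂ) * conj u)) (c : ℂ),
      emb2_mem hxy₀ h1 h2 h3⟩ with hw
    have hent : ∀ U : UG N, E x (w * U) = (c : ℂ) * (E x U + u * E y₀ U) := by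
      intro U
      show (emb2 x y₀ (c : ℂ) ((c : ℂ) * u) (-((c : ℂ) * conj u)) (c : ℂ)
        * (U : Matrix (Fin N) (Fin N) ℂ)) x 0 = _
      rw [emb2_mul_apply_x hxy₀]
      simp [hE]
      ring
    have step : ∫ U, P x U ^ 2 ∂μHaar
        = ∫ U, (1 / 4) * Complex.normSq (E x U + u * E y₀ U) ^ 2 ∂μHaar := by
      rw [← hinv w (fun U => P x U ^ 2)]
      refine integral_congr_ae (Filter.Eventually.of_forall fun U => ?_)
      show Complex.normSq (E x (w * U)) ^ 2 = _
      rw [hent U, Complex.normSq_mul, Complex.normSq_ofReal, ← sq, hcsq]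
      ring
    rw [integral_const_mul] at step
    rw [step]
    ring
  -- integrability of the rotated integrands
  have hIntRot : ∀ u : ℂ,
      Integrable (fun U => Complex.normSq (E x U + u * E y₀ U) ^ 2) μHaar := by
    intro u
    refine hInt _ (((1 + ‖u‖) ^ 2) ^ 2)
      ((Complex.continuous_normSq.comp ((hEcont x).add (continuous_const.mul (hEcont y₀)))).pow 2)
      fun U => ?_
    have habs : ‖E x U + u * E y₀ U‖ ≤ 1 + ‖u‖ := by
      calc ‖E x U + u * E y₀ U‖
          ≤ ‖E x U‖ + ‖u * E y₀ U‖ := norm_add_le _ _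
        _ ≤ 1 + ‖u‖ := by
            rw [norm_mul]
            have := hEbd y₀ U
            have := hEbd x U
            nlinarith [norm_nonneg u, norm_nonneg (E y₀ U)]
    have hnsq : Complex.normSq (E x U + u * E y₀ U) ≤ (1 + ‖u‖) ^ 2 := by
      rw [← Complex.sq_norm]
      nlinarith [norm_nonneg (E x U + u * E y₀ U)]
    rw [Real.norm_eq_abs, abs_of_nonneg (by positivity)]
    nlinarith [Complex.normSq_nonneg (E x U + u * E y₀ U)]
  -- pointwise sum identity
  have hptwise : ∀ a b : ℂ,
      Complex.normSq (a + 1 * b) ^ 2 + Complex.normSq (a + (-1) * b) ^ 2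
        + Complex.normSq (a + Complex.I * b) ^ 2
        + Complex.normSq (a + (-Complex.I) * b) ^ 2
      = 4 * Complex.normSq a ^ 2 + 4 * Complex.normSq b ^ 2
        + 16 * (Complex.normSq a * Complex.normSq b) := by
    intro a b
    simp only [Complex.normSq_apply, Complex.add_re, Complex.add_im, Complex.mul_re,
      Complex.mul_im, Complex.one_re, Complex.one_im, Complex.neg_re, Complex.neg_im,
      Complex.I_re, Complex.I_im]
    ring
  -- ∫ P y₀ ^ 2 = ∫ P x ^ 2
  have hsq_eq : ∫ U, P y₀ U ^ 2 ∂μHaar = ∫ U, P x U ^ 2 ∂μHaar := by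
    set w : UG N := ⟨emb2 y₀ x 0 1 1 0, hswap_mem y₀ x hy₀⟩ with hw
    rw [← hinv w (fun U => P y₀ U ^ 2)]
    refine integral_congr_ae (Filter.Eventually.of_forall fun U => ?_)
    show Complex.normSq (E y₀ (w * U)) ^ 2 = Complex.normSq (E x U) ^ 2
    have hentry : E y₀ (w * U) = E x U := by
      show (emb2 y₀ x 0 1 1 0 * (U : Matrix (Fin N) (Fin N) ℂ)) y₀ 0 = _
      rw [emb2_mul_apply_x hy₀]
      simp [hE]
    rw [hentry]
  -- combining the four rotations
  have hu1 : (1 : ℂ) * conj (1 : ℂ) = 1 := by simp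
  have hu2 : (-1 : ℂ) * conj (-1 : ℂ) = 1 := by simp
  have hu3 : Complex.I * conj Complex.I = 1 := by
    rw [Complex.conj_I]
    simp [Complex.I_mul_I]
  have hu4 : (-Complex.I) * conj (-Complex.I) = 1 := by
    rw [map_neg, Complex.conj_I]
    simp [Complex.I_mul_I]
  set F : ℂ → UG N → ℝ := fun u U => Complex.normSq (E x U + u * E y₀ U) ^ 2 with hF
  have h12 : Integrable (fun U => F 1 U + F (-1) U) μHaar :=
    (hIntRot 1).add (hIntRot (-1))
  have h123 : Integrable (fun U => F 1 U + F (-1) U + F Complex.I U) μHaar :=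
    h12.add (hIntRot Complex.I)
  have e3 : ∫ U, (F 1 U + F (-1) U + F Complex.I U + F (-Complex.I) U) ∂μHaar
      = (∫ U, (F 1 U + F (-1) U + F Complex.I U) ∂μHaar)
        + ∫ U, F (-Complex.I) U ∂μHaar := integral_add h123 (hIntRot _)
  have e2 : ∫ U, (F 1 U + F (-1) U + F Complex.I U) ∂μHaar
      = (∫ U, (F 1 U + F (-1) U) ∂μHaar) + ∫ U, F Complex.I U ∂μHaar :=
    integral_add h12 (hIntRot _)
  have e1 : ∫ U, (F 1 U + F (-1) U) ∂μHaar
      = (∫ U, F 1 U ∂μHaar) + ∫ U, F (-1) U ∂μHaar :=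
    integral_add (hIntRot 1) (hIntRot (-1))
  have hLHS : ∫ U, (F 1 U + F (-1) U + F Complex.I U + F (-Complex.I) U) ∂μHaar
      = 16 * ∫ U, P x U ^ 2 ∂μHaar := by
    rw [e3, e2, e1, hrot 1 hu1, hrot (-1) hu2, hrot Complex.I hu3, hrot (-Complex.I) hu4]
    ring
  have g12 : Integrable (fun U => 4 * P x U ^ 2 + 4 * P y₀ U ^ 2) μHaar :=
    ((hIntP2 x).const_mul 4).add ((hIntP2 y₀).const_mul 4)
  have f3 : ∫ U, (4 * P x U ^ 2 + 4 * P y₀ U ^ 2 + 16 * (P x U * P y₀ U)) ∂μHaar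
      = (∫ U, (4 * P x U ^ 2 + 4 * P y₀ U ^ 2) ∂μHaar)
        + ∫ U, 16 * (P x U * P y₀ U) ∂μHaar :=
    integral_add g12 ((hIntPP x y₀).const_mul 16)
  have f2 : ∫ U, (4 * P x U ^ 2 + 4 * P y₀ U ^ 2) ∂μHaar
      = (∫ U, 4 * P x U ^ 2 ∂μHaar) + ∫ U, 4 * P y₀ U ^ 2 ∂μHaar :=
    integral_add ((hIntP2 x).const_mul 4) ((hIntP2 y₀).const_mul 4)
  have m1 : ∫ U, 4 * P x U ^ 2 ∂μHaar = 4 * ∫ U, P x U ^ 2 ∂μHaar :=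
    integral_const_mul 4 _
  have m2 : ∫ U, 4 * P y₀ U ^ 2 ∂μHaar = 4 * ∫ U, P y₀ U ^ 2 ∂μHaar :=
    integral_const_mul 4 _
  have m3 : ∫ U, 16 * (P x U * P y₀ U) ∂μHaar = 16 * ∫ U, P x U * P y₀ U ∂μHaar :=
    integral_const_mul 16 _
  have hRHS : ∫ U, (F 1 U + F (-1) U + F Complex.I U + F (-Complex.I) U) ∂μHaar
      = 8 * (∫ U, P x U ^ 2 ∂μHaar) + 16 * ∫ U, P x U * P y₀ U ∂μHaar := by
    rw [integral_congr_ae (Filter.Eventually.of_forall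
      (fun U => by exact hptwise (E x U) (E y₀ U) :
        ∀ U : UG N, F 1 U + F (-1) U + F Complex.I U + F (-Complex.I) U
          = 4 * P x U ^ 2 + 4 * P y₀ U ^ 2 + 16 * (P x U * P y₀ U)))]
    rw [f3, f2, m1, m2, m3, hsq_eq]
    ring
  -- conclude: α = 2 β, then solve
  have halfbeta : ∫ U, P x U * P y₀ U ∂μHaar = (∫ U, P x U ^ 2 ∂μHaar) / 2 := by
    have := hLHS.symm.trans hRHS
    linarith
  rw [halfbeta] at key1
  have hNpos : (0 : ℝ) < N := by exact_mod_cast hN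
  field_simp at key1 ⊢
  nlinarith [key1, hNpos]
end
end

section
/- Let G = (V, E) be a finite simple graph on vertex set Fin n, and on the n-qubit Hilbert space (ℂ²)^{⊗n} define the translation-invariant-Ising-type Hamiltonian H := Σ_{(i,j) ∈ E} (π/4) Z_i Z_j − Σ_{v ∈ V} (π/4) deg(v) Z_v, where deg(v) is the degree of v in G. Then the unit-time evolution equals, up to a global phase, the product of controlled-Z gates along all edges: exp(−i H) = e^{iπ|E|/4} · ∏_{(i,j) ∈ E} CZ_{i,j}. -/
noncomputable section

/-- A computational basis label for `n` qubits: a bit string of length `n`. -/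
abbrev QVec (n : ℕ) := Fin n → Fin 2

/-- An operator on the `n`-qubit Hilbert space `(ℂ²)^{⊗n}`, written as a matrix in
the computational basis. -/
abbrev QOp (n : ℕ) := Matrix (QVec n) (QVec n) ℂ

/-- The Pauli-Z matrix `diag(1,−1)` acting on the `i`-th tensor factor. -/
def ZGate (n : ℕ) (i : Fin n) : QOp n :=
  Matrix.diagonal fun s => if s i = 0 then 1 else -1

/-- The controlled-Z gate acting on qubits `i` and `j`: the diagonal unitary that
multiplies a computational basis state by `−1` exactly when both qubits `i` and `j`
are in state `1`. -/
def CZGate (n : ℕ) (i j : Fin n) : QOp n :=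
  Matrix.diagonal fun s => if s i = 1 ∧ s j = 1 then -1 else 1

/-- Any two controlled-Z gates commute (they are diagonal matrices). -/
theorem czGate_commute (n : ℕ) (p q : Fin n × Fin n) :
    Commute (CZGate n p.1 p.2) (CZGate n q.1 q.2) := by
  simp only [Commute, SemiconjBy, CZGate, Matrix.diagonal_mul_diagonal, mul_comm]

/-- The edge set of a simple graph `G` on `Fin n`, with each edge listed once as an
ordered pair `(i, j)` with `i < j`. -/
def edgePairs (n : ℕ) (G : SimpleGraph (Fin n)) [DecidableRel G.Adj] :
    Finset (Fin n × Fin n) :=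
  Finset.univ.filter fun p : Fin n × Fin n => G.Adj p.1 p.2 ∧ p.1 < p.2

/-- The translation-invariant-Ising-type Hamiltonian
`H = Σ_{(i,j) ∈ E} (π/4) Z_i Z_j − Σ_v (π/4) deg(v) Z_v` attached to a graph `G`. -/
def isingHam (n : ℕ) (G : SimpleGraph (Fin n)) [DecidableRel G.Adj] : QOp n :=
  (∑ p ∈ edgePairs n G, ((Real.pi / 4 : ℝ) : ℂ) • (ZGate n p.1 * ZGate n p.2)) -
    ∑ v : Fin n, ((Real.pi / 4 * (G.degree v : ℝ) : ℝ) : ℂ) • ZGate n v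

open Finset in
theorem degree_sum (n : ℕ) (G : SimpleGraph (Fin n)) [DecidableRel G.Adj] (f : Fin n → ℂ) :
    ∑ v : Fin n, (G.degree v : ℂ) * f v = ∑ p ∈ edgePairs n G, (f p.1 + f p.2) := by
  have h1 : ∀ v : Fin n, (G.degree v : ℂ) * f v
      = ∑ w : Fin n, if G.Adj v w then f v else 0 := by
    intro v
    rw [← Finset.sum_filter, Finset.sum_const, ← SimpleGraph.neighborFinset_eq_filter,
      ← SimpleGraph.degree, nsmul_eq_mul]
  simp_rw [h1]
  rw [← Fintype.sum_prod_type']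
  rw [← Finset.sum_filter]
  have hsplit : (Finset.univ.filter fun p : Fin n × Fin n => G.Adj p.1 p.2)
      = edgePairs n G ∪ (Finset.univ.filter fun p : Fin n × Fin n => G.Adj p.1 p.2 ∧ p.2 < p.1) := by
    rw [edgePairs, ← Finset.filter_or]
    apply Finset.filter_congr
    intro p _
    constructor
    · intro h
      rcases lt_or_gt_of_ne (G.ne_of_adj h) with h' | h'
      · exact Or.inl ⟨h, h'⟩
      · exact Or.inr ⟨h, h'⟩
    · rintro (⟨h, _⟩ | ⟨h, _⟩) <;> exact h
  have hdisj : Disjoint (edgePairs n G)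
      (Finset.univ.filter fun p : Fin n × Fin n => G.Adj p.1 p.2 ∧ p.2 < p.1) := by
    rw [Finset.disjoint_left]
    rintro p hp hq
    rw [edgePairs, Finset.mem_filter] at hp
    rw [Finset.mem_filter] at hq
    exact absurd hq.2.2 (asymm hp.2.2)
  rw [hsplit, Finset.sum_union hdisj, Finset.sum_add_distrib]
  congr 1
  refine Finset.sum_nbij' (fun p => Prod.swap p) (fun p => Prod.swap p) ?_ ?_ ?_ ?_ ?_
  · rintro p hp
    rw [Finset.mem_filter] at hp
    rw [edgePairs, Finset.mem_filter]
    exact ⟨Finset.mem_univ _, hp.2.1.symm, hp.2.2⟩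
  · rintro p hp
    rw [edgePairs, Finset.mem_filter] at hp
    rw [Finset.mem_filter]
    exact ⟨Finset.mem_univ _, hp.2.1.symm, hp.2.2⟩
  · intro p _; rfl
  · intro p _; rfl
  · intro p _; rfl

/-- scalar value of Z on a bit -/
def zv (b : Fin 2) : ℂ := if b = 0 then 1 else -1

theorem isingHam_diagonal (n : ℕ) (G : SimpleGraph (Fin n)) [DecidableRel G.Adj] :
    isingHam n G = Matrix.diagonal (fun s : QVec n =>
      ∑ p ∈ edgePairs n G,
        ((Real.pi : ℂ) / 4) * (zv (s p.1) * zv (s p.2) - zv (s p.1) - zv (s p.2))) := by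
  have hZZ : ∀ p : Fin n × Fin n, ((Real.pi / 4 : ℝ) : ℂ) • (ZGate n p.1 * ZGate n p.2)
      = Matrix.diagonal (fun s : QVec n => ((Real.pi : ℂ) / 4) * (zv (s p.1) * zv (s p.2))) := by
    intro p
    rw [ZGate, ZGate, Matrix.diagonal_mul_diagonal, ← Matrix.diagonal_smul]
    refine congrArg Matrix.diagonal ?_
    funext s
    simp only [Pi.smul_apply, smul_eq_mul, zv]
    push_cast
    split_ifs <;> ring
  have hZ : ∀ v : Fin n, ((Real.pi / 4 * (G.degree v : ℝ) : ℝ) : ℂ) • ZGate n v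
      = Matrix.diagonal (fun s : QVec n => (G.degree v : ℂ) * (((Real.pi : ℂ) / 4) * zv (s v))) := by
    intro v
    rw [ZGate, ← Matrix.diagonal_smul]
    refine congrArg Matrix.diagonal ?_
    funext s
    simp only [Pi.smul_apply, smul_eq_mul, zv]
    push_cast
    split_ifs <;> ring
  have hds : ∀ {ι : Type} (t : Finset ι) (f : ι → (QVec n → ℂ)),
      ∑ i ∈ t, Matrix.diagonal (f i) = Matrix.diagonal (∑ i ∈ t, f i) :=
    fun t f => (map_sum (Matrix.diagonalAddMonoidHom (QVec n) ℂ) f t).symm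
  simp_rw [isingHam, hZZ, hZ]
  rw [hds, hds, Matrix.diagonal_sub]
  refine congrArg Matrix.diagonal ?_
  funext s
  simp only [Finset.sum_apply, Pi.sub_apply]
  rw [degree_sum n G (fun v => ((Real.pi : ℂ) / 4) * zv (s v))]
  rw [← Finset.sum_sub_distrib]
  apply Finset.sum_congr rfl
  intro p _
  ring

theorem key_scalar (a b : Fin 2) :
    Complex.exp (-Complex.I * ((Real.pi : ℂ) / 4 * (zv a * zv b - zv a - zv b))) =
      Complex.exp (Complex.I * (Real.pi : ℂ) / 4) * (if a = 1 ∧ b = 1 then -1 else 1) := by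
  have h1 : Complex.exp (-Complex.I * ((Real.pi : ℂ) / 4 * (-1 : ℂ)))
      = Complex.exp (Complex.I * (Real.pi : ℂ) / 4) := by
    congr 1; ring
  have h2 : Complex.exp (-Complex.I * ((Real.pi : ℂ) / 4 * (3 : ℂ)))
      = Complex.exp (Complex.I * (Real.pi : ℂ) / 4) * (-1) := by
    rw [show -Complex.I * ((Real.pi : ℂ) / 4 * (3 : ℂ))
        = Complex.I * (Real.pi : ℂ) / 4 + (Real.pi : ℂ) * Complex.I + -(2 * (Real.pi : ℂ) * Complex.I) from by ring]
    rw [Complex.exp_add, Complex.exp_add, Complex.exp_pi_mul_I, Complex.exp_neg,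
      Complex.exp_two_pi_mul_I]
    ring
  fin_cases a <;> fin_cases b <;> simp only [zv] <;> norm_num
  · rw [← h1]; congr 1; ring
  · rw [← h1]; congr 1; ring
  · rw [← h1]; congr 1; ring
  · rw [show (-(Complex.I * ((Real.pi : ℂ) / 4 * 3))) = -Complex.I * ((Real.pi : ℂ) / 4 * (3 : ℂ)) from by ring, h2]
    ring


/-- **The Ising quench implements controlled-Z gates on all edges.**
For the Hamiltonian `H = Σ_{(i,j)∈E} (π/4) Z_iZ_j − Σ_v (π/4) deg(v) Z_v` of a finite
simple graph `G = (V, E)` on `Fin n`, the unit-time evolution equals, up to the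
global phase `e^{iπ|E|/4}`, the product of controlled-Z gates along all edges:
`exp(−iH) = e^{iπ|E|/4} · ∏_{(i,j) ∈ E} CZ_{i,j}`. -/
theorem exp_neg_I_isingHam (n : ℕ) (G : SimpleGraph (Fin n)) [DecidableRel G.Adj] :
    NormedSpace.exp ((-Complex.I) • isingHam n G) =
      Complex.exp (Complex.I * Real.pi * (edgePairs n G).card / 4) •
        (edgePairs n G).noncommProd (fun p => CZGate n p.1 p.2)
          (fun p _ q _ _ => czGate_commute n p q) := by
  rw [isingHam_diagonal, ← Matrix.diagonal_smul, Matrix.exp_diagonal]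
  have hnc : (edgePairs n G).noncommProd (fun p => CZGate n p.1 p.2)
        (fun p _ q _ _ => czGate_commute n p q)
      = Matrix.diagonal (fun s : QVec n =>
          ∏ p ∈ edgePairs n G, (if s p.1 = 1 ∧ s p.2 = 1 then (-1 : ℂ) else 1)) := by
    have h := Finset.map_noncommProd (edgePairs n G)
      (fun p => (fun s : QVec n => if s p.1 = 1 ∧ s p.2 = 1 then (-1 : ℂ) else 1))
      (fun _ _ _ _ _ => Commute.all _ _) (Matrix.diagonalRingHom (QVec n) ℂ)
    rw [Finset.noncommProd_eq_prod] at h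
    have h2 : (edgePairs n G).noncommProd (fun p => CZGate n p.1 p.2)
          (fun p _ q _ _ => czGate_commute n p q)
        = Matrix.diagonal (∏ p ∈ edgePairs n G,
            fun s : QVec n => if s p.1 = 1 ∧ s p.2 = 1 then (-1 : ℂ) else 1) := h.symm
    rw [h2]
    refine congrArg Matrix.diagonal ?_
    funext s
    simp [Finset.prod_apply]
  rw [hnc, ← Matrix.diagonal_smul]
  refine congrArg Matrix.diagonal ?_
  funext s
  rw [Pi.coe_exp, ← Complex.exp_eq_exp_ℂ]
  simp only [Pi.smul_apply, smul_eq_mul]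
  rw [Finset.mul_sum, Complex.exp_sum]
  have hcard : Complex.exp (Complex.I * (Real.pi : ℂ) * ((edgePairs n G).card : ℂ) / 4)
      = ∏ _p ∈ edgePairs n G, Complex.exp (Complex.I * (Real.pi : ℂ) / 4) := by
    rw [Finset.prod_const, ← Complex.exp_nat_mul]
    congr 1; ring
  rw [hcard, ← Finset.prod_mul_distrib]
  apply Finset.prod_congr rfl
  intro p _
  exact key_scalar (s p.1) (s p.2)
end
end
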